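/- For each k ≥ 1 and z ∈ ℂ, the function l_{z,k}(w) = ((k−1)!)^{−1/2} (w̄ − z̄)^{k−1} e^{w z̄ − |z|²/2} is a unit vector in L²(ℂ, μ), and l_{z,k} = (𝔸†)^{k−1} k_z where k_z(w) = e^{w z̄ − |z|²/2} and 𝔸† acts on the Fock space component by (1/√j)(−∂/∂z + z̄) on the j-th true polyanalytic component. In particular, applying (−∂/∂w + w̄) repeatedly: ((1/√(k−1))·(−∂/∂w + w̄)) l_{z,k−1} = l_{z,k}. -/

import Mathlib

open Complex MeasureTheory
open scoped ENNReal NNReal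

/-- The Gaussian measure dμ(z) = π⁻¹ e^{-|z|²} dz on ℂ. -/
noncomputable def gaussMeasure : Measure ℂ :=
  volume.withDensity fun z => ENNReal.ofReal (Real.exp (-‖z‖ ^ 2) / Real.pi)

/-- Wirtinger derivative ∂/∂z = (1/2)(∂/∂x − i ∂/∂y). -/
noncomputable def wdz (f : ℂ → ℂ) (z : ℂ) : ℂ :=
  (1/2 : ℂ) * (fderiv ℝ f z 1 - Complex.I * fderiv ℝ f z Complex.I)

/-- l_{z,k}(w) = ((k−1)!)^{−1/2} (w̄ − z̄)^{k−1} e^{w z̄ − |z|²/2}. -/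
noncomputable def lKer (z : ℂ) (k : ℕ) : ℂ → ℂ := fun w =>
  ((1 / Real.sqrt (Nat.factorial (k - 1)) : ℝ) : ℂ) *
    ((starRingEnd ℂ) w - (starRingEnd ℂ) z) ^ (k - 1) *
    Complex.exp (w * (starRingEnd ℂ) z - (‖z‖ ^ 2 : ℝ) / 2)

lemma wdz_aux (z C c2 : ℂ) (n : ℕ) (w : ℂ) :
    wdz (fun w => C * ((starRingEnd ℂ) w - (starRingEnd ℂ) z) ^ n *
      Complex.exp (w * (starRingEnd ℂ) z - c2)) w
    = (starRingEnd ℂ) z * (C * ((starRingEnd ℂ) w - (starRingEnd ℂ) z) ^ n *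
      Complex.exp (w * (starRingEnd ℂ) z - c2)) := by
  have hp : HasDerivAt (fun w : ℂ => (w - z) ^ n) ((n : ℂ) * (w - z) ^ (n - 1)) w := by
    simpa [Function.comp_def] using ((hasDerivAt_pow n (w - z)).comp w ((hasDerivAt_id w).sub_const z))
  have hg : HasFDerivAt (fun w : ℂ => ((starRingEnd ℂ) w - (starRingEnd ℂ) z) ^ n)
      ((Complex.conjCLE.toContinuousLinearMap).comp
        (ContinuousLinearMap.restrictScalars ℝ
          ((1 : ℂ →L[ℂ] ℂ).smulRight ((n : ℂ) * (w - z) ^ (n - 1))))) w := by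
    have := (Complex.conjCLE.toContinuousLinearMap.hasFDerivAt (x := (w - z) ^ n)).comp w
      (hp.hasFDerivAt.restrictScalars ℝ)
    have hfun : (⇑Complex.conjCLE.toContinuousLinearMap ∘ fun w : ℂ => (w - z) ^ n)
        = fun w : ℂ => ((starRingEnd ℂ) w - (starRingEnd ℂ) z) ^ n := by
      funext v
      simp [Complex.conjCLE_apply, map_pow, map_sub]
    rwa [hfun] at this
  have he : HasDerivAt (fun w : ℂ => Complex.exp (w * (starRingEnd ℂ) z - c2))
      (Complex.exp (w * (starRingEnd ℂ) z - c2) * (starRingEnd ℂ) z) w := by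
    simpa using (((hasDerivAt_id w).mul_const ((starRingEnd ℂ) z)).sub_const c2).cexp
  have H : HasFDerivAt (fun w => C * ((starRingEnd ℂ) w - (starRingEnd ℂ) z) ^ n *
      Complex.exp (w * (starRingEnd ℂ) z - c2)) _ w :=
    (hg.const_mul C).mul (he.hasFDerivAt.restrictScalars ℝ)
  rw [wdz, H.fderiv]
  simp only [ContinuousLinearMap.add_apply, ContinuousLinearMap.smul_apply,
    ContinuousLinearMap.coe_comp', ContinuousLinearMap.coe_restrictScalars',
    Function.comp_apply, ContinuousLinearMap.smulRight_apply,
    ContinuousLinearMap.one_apply, ContinuousLinearEquiv.coe_coe,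
    Complex.conjCLE_apply, smul_eq_mul, map_mul, map_one, Complex.conj_I,
    map_natCast, ContinuousLinearMap.toSpanSingleton_apply]
  ring_nf
  rw [Complex.I_sq]
  ring

lemma wdz_lKer (z : ℂ) (m : ℕ) (w : ℂ) :
    wdz (lKer z m) w = (starRingEnd ℂ) z * lKer z m w := by
  exact wdz_aux z ((1 / Real.sqrt (Nat.factorial (m - 1)) : ℝ) : ℂ)
    (((‖z‖ ^ 2 : ℝ) : ℂ) / 2) (m - 1) w

lemma gauss_int (n : ℕ) :
    (∫ v : ℂ, ‖v‖ ^ (2 * n) * Real.exp (-‖v‖ ^ 2)) = Real.pi * n.factorial := by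
  have h := Complex.integral_rpow_mul_exp_neg_rpow (p := 2) (q := (2 * n : ℕ))
    one_le_two (lt_of_lt_of_le (by norm_num) (Nat.cast_nonneg _))
  have h2 : ∀ v : ℂ, ‖v‖ ^ ((2 * n : ℕ) : ℝ) * Real.exp (-‖v‖ ^ (2 : ℝ))
      = ‖v‖ ^ (2 * n) * Real.exp (-‖v‖ ^ 2) := by
    intro v
    rw [Real.rpow_natCast, show ((2:ℝ)) = ((2:ℕ):ℝ) by norm_num, Real.rpow_natCast]
  simp only [h2] at h
  rw [h]
  have : (((2 * n : ℕ) : ℝ) + 2) / 2 = (n : ℝ) + 1 := by push_cast; ring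
  rw [this, Real.Gamma_nat_eq_factorial]
  ring

lemma lKer_pointwise (z w : ℂ) (k : ℕ) :
    (Real.exp (-‖w‖ ^ 2) / Real.pi) * ‖lKer z k w‖ ^ 2
      = ((((k-1).factorial : ℝ) * Real.pi)⁻¹) *
        (‖w - z‖ ^ (2 * (k - 1)) * Real.exp (-‖w - z‖ ^ 2)) := by
  have hfac : (0:ℝ) < ((k-1).factorial : ℝ) := by positivity
  have hnorm : ‖lKer z k w‖ ^ 2
      = (((k-1).factorial : ℝ))⁻¹ * ‖w - z‖ ^ (2 * (k-1)) *
        Real.exp (2 * (w * (starRingEnd ℂ) z).re - ‖z‖ ^ 2) := by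
    rw [lKer]
    rw [norm_mul, norm_mul, mul_pow, mul_pow, norm_pow]
    have h1 : ‖(((1 / Real.sqrt ((k-1).factorial) : ℝ)) : ℂ)‖ ^ 2
        = (((k-1).factorial : ℝ))⁻¹ := by
      rw [Complex.norm_real, Real.norm_eq_abs, _root_.abs_of_nonneg (by positivity), div_pow,
        Real.sq_sqrt hfac.le, one_pow, one_div]
    have h2 : ‖(starRingEnd ℂ) w - (starRingEnd ℂ) z‖ = ‖w - z‖ := by
      rw [← map_sub]
      exact RCLike.norm_conj _
    have h3 : ‖Complex.exp (w * (starRingEnd ℂ) z - (‖z‖ ^ 2 : ℝ) / 2)‖ ^ 2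
        = Real.exp (2 * (w * (starRingEnd ℂ) z).re - ‖z‖ ^ 2) := by
      rw [Complex.norm_exp, ← Real.exp_nat_mul]
      congr 1
      simp [Complex.sub_re, Complex.div_re, Complex.ofReal_re, ← Complex.ofReal_pow]
      ring
    rw [h1, h2, h3, ← pow_mul, mul_comm (k-1) 2]
  have hn : ∀ u : ℂ, ‖u‖ ^ 2 = Complex.normSq u := fun u => by
    rw [Complex.sq_norm]
  have hns : ‖w - z‖ ^ 2 = ‖w‖ ^ 2 - 2 * (w * (starRingEnd ℂ) z).re + ‖z‖ ^ 2 := by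
    rw [hn, hn, hn, Complex.normSq_sub]; ring
  rw [hnorm, show (-‖w - z‖^2) = (-‖w‖^2) + (2 * (w * (starRingEnd ℂ) z).re - ‖z‖^2) by
    rw [hns]; ring, Real.exp_add, mul_inv]
  field_simp

/-- l_{z,k} is a unit vector in L²(ℂ,μ) and is obtained from l_{z,k−1} by the normalized
creation operator (1/√(k−1))(−∂/∂w + w̄). -/
theorem lKer_unit_and_creation (z : ℂ) (k : ℕ) (hk : 1 ≤ k) :
    (∫ w, ‖lKer z k w‖ ^ 2 ∂gaussMeasure) = 1 ∧
    (2 ≤ k → ∀ w : ℂ,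
      ((1 / Real.sqrt (k - 1) : ℝ) : ℂ) *
        (-(wdz (lKer z (k - 1)) w) + (starRingEnd ℂ) w * lKer z (k - 1) w)
        = lKer z k w) := by
  constructor
  · -- unit norm
    have hmeas : Measurable fun w : ℂ => (Real.exp (-‖w‖ ^ 2) / Real.pi).toNNReal := by
      fun_prop
    have h0 : gaussMeasure
        = volume.withDensity fun w : ℂ =>
            ((Real.exp (-‖w‖ ^ 2) / Real.pi).toNNReal : ℝ≥0∞) := rfl
    rw [h0, integral_withDensity_eq_integral_smul hmeas]
    have hpt : (fun w : ℂ => (Real.exp (-‖w‖ ^ 2) / Real.pi).toNNReal • ‖lKer z k w‖ ^ 2)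
        = fun w : ℂ => ((((k-1).factorial : ℝ) * Real.pi)⁻¹) *
          (‖w - z‖ ^ (2 * (k - 1)) * Real.exp (-‖w - z‖ ^ 2)) := by
      funext w
      rw [NNReal.smul_def, Real.coe_toNNReal _ (by positivity)]
      exact lKer_pointwise z w k
    rw [hpt, integral_const_mul]
    have htrans : (∫ w : ℂ, ‖w - z‖ ^ (2 * (k - 1)) * Real.exp (-‖w - z‖ ^ 2))
        = ∫ v : ℂ, ‖v‖ ^ (2 * (k - 1)) * Real.exp (-‖v‖ ^ 2) :=
      integral_sub_right_eq_self (fun v : ℂ => ‖v‖ ^ (2 * (k - 1)) * Real.exp (-‖v‖ ^ 2)) z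
    rw [htrans, gauss_int]
    have : ((k-1).factorial : ℝ) ≠ 0 := by positivity
    field_simp
  · -- creation operator
    intro hk2 w
    rw [wdz_lKer]
    have hk1 : k - 1 - 1 = k - 2 := by omega
    have hsub : ((k : ℝ) - 1) = ((k - 1 : ℕ) : ℝ) := by
      push_cast [Nat.cast_sub hk]; ring
    rw [lKer, lKer, hk1]
    have hpow : ((starRingEnd ℂ) w - (starRingEnd ℂ) z) ^ (k - 1)
        = ((starRingEnd ℂ) w - (starRingEnd ℂ) z) * ((starRingEnd ℂ) w - (starRingEnd ℂ) z) ^ (k - 2) := by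
      rw [← pow_succ']
      congr 1
      omega
    have hfac : ((k-1).factorial : ℝ) = ((k-1 : ℕ) : ℝ) * ((k-2).factorial : ℝ) := by
      rw [show k - 1 = (k - 2) + 1 by omega, Nat.factorial_succ]
      push_cast
      ring
    have hsqrt : Real.sqrt ((k-1).factorial) = Real.sqrt ((k:ℝ) - 1) * Real.sqrt ((k-2).factorial) := by
      rw [hfac, hsub, Real.sqrt_mul (by positivity)]
    rw [hpow, hsqrt]
    have h1 : Real.sqrt ((k:ℝ) - 1) ≠ 0 := by
      refine Real.sqrt_ne_zero'.mpr ?_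
      have : (2:ℝ) ≤ (k:ℝ) := by exact_mod_cast hk2
      linarith
    have h2 : Real.sqrt (((k-2).factorial : ℝ)) ≠ 0 := by
      refine Real.sqrt_ne_zero'.mpr (by positivity)
    push_cast
    field_simp
    ring
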